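/- Let η₁ ≥ η₂ ≥ ⋯ ≥ ηₙ be real numbers with ∑ η_i = 0 and ∑ η_i² = 1, where n > 2. If η₁ − ηₙ > 1, then for all 2 ≤ i < j ≤ n−1 we have η_i − η_j ≤ 1. -/
import Mathlib


theorem stmt_1 (n : ℕ) (hn : 2 < n) (η : Fin n → ℝ) (hmono : Antitone η)
    (hsum : ∑ i, η i = 0) (hsq : ∑ i, (η i) ^ 2 = 1)
    (hgap : η ⟨0, by omega⟩ - η ⟨n - 1, by omega⟩ > 1) :
    ∀ i j : Fin n, 1 ≤ (i : ℕ) → i < j → (j : ℕ) ≤ n - 2 → η i - η j ≤ 1 := by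
  intro i j hi hij hj
  by_contra h
  push_neg at h
  set i0 : Fin n := ⟨0, by omega⟩ with hi0
  set i1 : Fin n := ⟨n - 1, by omega⟩ with hi1
  have hij' : (i : ℕ) < (j : ℕ) := hij
  have h0i : i0 ≠ i := Fin.ne_of_val_ne (by simp [hi0]; omega)
  have h0j : i0 ≠ j := Fin.ne_of_val_ne (by simp [hi0]; omega)
  have h01 : i0 ≠ i1 := Fin.ne_of_val_ne (by simp [hi0, hi1]; omega)
  have hij2 : i ≠ j := Fin.ne_of_val_ne (by omega)
  have hi1' : i ≠ i1 := Fin.ne_of_val_ne (by simp [hi1]; omega)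
  have hj1 : j ≠ i1 := Fin.ne_of_val_ne (by simp [hi1]; omega)
  have hsub : ∑ k ∈ ({i0, i, j, i1} : Finset (Fin n)), (η k) ^ 2 ≤ 1 := by
    rw [← hsq]
    exact Finset.sum_le_sum_of_subset_of_nonneg (Finset.subset_univ _)
      (fun k _ _ => sq_nonneg (η k))
  rw [Finset.sum_insert (by simp [h0i, h0j, h01]),
      Finset.sum_insert (by simp [hij2, hi1']),
      Finset.sum_pair hj1] at hsub
  nlinarith [sq_nonneg (η i0 + η i1), sq_nonneg (η i + η j), hgap, h]
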